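/- arXiv:0908.1264 — 6 statements merged into one kernel-verified Lean document; each statement's English description precedes it below -/
import Mathlib

section
/- Let λ > 0, σ_z² > 0, θ > 0 and μ̂ > 0 be real numbers. Define Δ = λ² μ̂² σ_z⁴ + 4 λ μ̂² θ σ_z² + 4 θ² μ̂ λ σ_z² and P_d = max(0, (−λ σ_z² (2θ + μ̂) + √Δ)/(2 λ θ (μ̂ + θ))). Then P_d is a global maximizer over P ∈ [0, ∞) of the function P ↦ log(1 + P μ̂/(P θ + σ_z²)) − λ P. -/
open Set

lemma hasDeriv_aux (lam σ θ μ : ℝ) (hσ : 0 < σ) (hθ : 0 < θ) (hμ : 0 < μ)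
    (P : ℝ) (hP : 0 ≤ P) :
    HasDerivAt (fun x => Real.log (1 + x * μ / (x * θ + σ)) - lam * x)
      (μ * σ / ((P * θ + σ) * (P * (θ + μ) + σ)) - lam) P := by
  have hden : 0 < P * θ + σ := by positivity
  have hden2 : 0 < P * (θ + μ) + σ := by positivity
  have h1 : HasDerivAt (fun x : ℝ => 1 + x * μ / (x * θ + σ))
      ((μ * (P * θ + σ) - P * μ * θ) / (P * θ + σ) ^ 2) P := by
    have := (((hasDerivAt_id P).mul_const μ).div
      (((hasDerivAt_id P).mul_const θ).add_const σ) hden.ne')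
    simpa using this.const_add 1
  have hgpos : 0 < 1 + P * μ / (P * θ + σ) := by positivity
  have h2 := (h1.log hgpos.ne').sub ((hasDerivAt_id P).const_mul lam)
  refine HasDerivAt.congr_deriv h2 ?_
  rw [mul_one]
  field_simp
  ring

/-- The water-filling data power allocation P_d globally maximizes
P ↦ log(1 + Pμ̂/(Pθ + σ_z²)) − λP over P ∈ [0, ∞). -/
theorem stmt1 (lam σz2 θ μ Δ Pd : ℝ)
    (hlam : 0 < lam) (hσz : 0 < σz2) (hθ : 0 < θ) (hμ : 0 < μ)
    (hΔ : Δ = lam ^ 2 * μ ^ 2 * σz2 ^ 2 + 4 * lam * μ ^ 2 * θ * σz2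
      + 4 * θ ^ 2 * μ * lam * σz2)
    (hPd : Pd = max 0 ((-(lam * σz2 * (2 * θ + μ)) + Real.sqrt Δ)
      / (2 * lam * θ * (μ + θ)))) :
    0 ≤ Pd ∧ ∀ P : ℝ, 0 ≤ P →
      Real.log (1 + P * μ / (P * θ + σz2)) - lam * P ≤
      Real.log (1 + Pd * μ / (Pd * θ + σz2)) - lam * Pd := by
  set f : ℝ → ℝ := fun x => Real.log (1 + x * μ / (x * θ + σz2)) - lam * x with hf
  set a := lam * θ * (μ + θ) with ha_def
  set b := lam * σz2 * (2 * θ + μ) with hb_def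
  set c := lam * σz2 ^ 2 - μ * σz2 with hc_def
  have ha : 0 < a := by rw [ha_def]; positivity
  have hb : 0 < b := by rw [hb_def]; positivity
  have hΔpos : 0 < Δ := by rw [hΔ]; positivity
  set s := Real.sqrt Δ with hs_def
  have hs0 : 0 < s := Real.sqrt_pos.2 hΔpos
  have hs2 : s ^ 2 = b ^ 2 - 4 * a * c := by
    rw [hs_def, Real.sq_sqrt hΔpos.le, hΔ, hb_def, ha_def, hc_def]; ring
  set r := (-b + s) / (2 * a) with hr_def
  set r1 := (-b - s) / (2 * a) with hr1_def
  have hr1 : r1 ≤ 0 := by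
    rw [hr1_def]
    apply div_nonpos_of_nonpos_of_nonneg <;> nlinarith
  have hPd' : Pd = max 0 r := by
    rw [hPd, hr_def, ha_def, hb_def]
    norm_num [mul_assoc]
  have hPd0 : 0 ≤ Pd := hPd' ▸ le_max_left _ _
  have hrPd : r ≤ Pd := hPd' ▸ le_max_right _ _
  -- quadratic factorization
  have hqid : ∀ P : ℝ, a * P ^ 2 + b * P + c = a * ((P - r) * (P - r1)) := by
    intro P
    rw [hr_def, hr1_def]
    field_simp
    ring_nf
    linear_combination hs2
  -- derivative at any nonneg point
  have hderiv : ∀ P : ℝ, 0 ≤ P →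
      HasDerivAt f (μ * σz2 / ((P * θ + σz2) * (P * (θ + μ) + σz2)) - lam) P :=
    fun P hP => hasDeriv_aux lam σz2 θ μ hσz hθ hμ P hP
  have hderiv' : ∀ P : ℝ, 0 ≤ P →
      deriv f P = μ * σz2 / ((P * θ + σz2) * (P * (θ + μ) + σz2)) - lam :=
    fun P hP => (hderiv P hP).deriv
  have hcont : ContinuousOn f (Ici 0) :=
    fun x hx => ((hderiv x hx).differentiableAt).continuousAt.continuousWithinAt
  have hdiff : ∀ x ∈ Ici (0:ℝ), DifferentiableAt ℝ f x :=
    fun x hx => (hderiv x hx).differentiableAt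
  -- sign of derivative vs quadratic
  have hsign : ∀ P : ℝ, 0 ≤ P →
      (a * P ^ 2 + b * P + c ≤ 0 → 0 ≤ deriv f P) ∧
      (0 ≤ a * P ^ 2 + b * P + c → deriv f P ≤ 0) := by
    intro P hP
    have hden : 0 < P * θ + σz2 := by positivity
    have hden2 : 0 < P * (θ + μ) + σz2 := by positivity
    rw [hderiv' P hP]
    have key : lam * ((P * θ + σz2) * (P * (θ + μ) + σz2)) - μ * σz2
        = a * P ^ 2 + b * P + c := by
      rw [ha_def, hb_def, hc_def]; ring
    constructor
    · intro hq
      rw [sub_nonneg, le_div_iff₀ (by positivity)]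
      linarith [key, hq]
    · intro hq
      rw [sub_nonpos, div_le_iff₀ (by positivity)]
      linarith [key, hq]
  -- monotone on [0, Pd]
  have hmono : MonotoneOn f (Icc 0 Pd) := by
    apply monotoneOn_of_deriv_nonneg (convex_Icc _ _)
      (hcont.mono (Icc_subset_Ici_self))
      (fun x hx => (hdiff x (by
        rw [interior_Icc] at hx; exact le_of_lt hx.1)).differentiableWithinAt)
    intro x hx
    rw [interior_Icc] at hx
    have hx0 : 0 ≤ x := hx.1.le
    apply (hsign x hx0).1
    rw [hqid]
    have hxr : x ≤ r := by
      rcases le_or_gt r 0 with h | h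
      · exfalso
        have : Pd = 0 := by rw [hPd']; exact max_eq_left h
        rw [this] at hx; linarith [hx.1, hx.2]
      · have : Pd = r := by rw [hPd']; exact max_eq_right h.le
        linarith [hx.2, this ▸ hx.2]
    have h1 : x - r ≤ 0 := by linarith
    have h2 : 0 ≤ x - r1 := by linarith
    exact mul_nonpos_iff.mpr (Or.inl ⟨ha.le, mul_nonpos_of_nonpos_of_nonneg h1 h2⟩)
  -- antitone on [Pd, ∞)
  have hanti : AntitoneOn f (Ici Pd) := by
    apply antitoneOn_of_deriv_nonpos (convex_Ici _)
      (hcont.mono (Ici_subset_Ici.2 hPd0))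
      (fun x hx => (hdiff x (by
        rw [interior_Ici] at hx; exact le_trans hPd0 (le_of_lt hx))).differentiableWithinAt)
    intro x hx
    rw [interior_Ici] at hx
    have hx0 : 0 ≤ x := le_trans hPd0 hx.le
    apply (hsign x hx0).2
    rw [hqid]
    have h1 : 0 ≤ x - r := by have := hrPd; linarith [(show Pd < x from hx).le]
    have h2 : 0 ≤ x - r1 := by linarith
    exact mul_nonneg ha.le (mul_nonneg h1 h2)
  refine ⟨hPd0, fun P hP => ?_⟩
  have : f P ≤ f Pd := by
    rcases le_total P Pd with h | h
    · exact hmono ⟨hP, h⟩ ⟨hPd0, le_refl _⟩ h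
    · exact hanti (le_refl Pd) h h
  simpa [hf] using this
end

section
/- Let λ > 0, σ_z² > 0, θ > 0 and μ̂ > 0 be real numbers, let Δ = λ² μ̂² σ_z⁴ + 4 λ μ̂² θ σ_z² + 4 θ² μ̂ λ σ_z², and let P_d = max(0, (−λ σ_z² (2θ + μ̂) + √Δ)/(2 λ θ (μ̂ + θ))). Then P_d > 0 if and only if μ̂ > λ σ_z². -/
/-- The water-filling power P_d is strictly positive iff μ̂ > λσ_z². -/
theorem stmt2 (lam σz2 θ μ Δ Pd : ℝ)
    (hlam : 0 < lam) (hσz : 0 < σz2) (hθ : 0 < θ) (hμ : 0 < μ)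
    (hΔ : Δ = lam ^ 2 * μ ^ 2 * σz2 ^ 2 + 4 * lam * μ ^ 2 * θ * σz2
      + 4 * θ ^ 2 * μ * lam * σz2)
    (hPd : Pd = max 0 ((-(lam * σz2 * (2 * θ + μ)) + Real.sqrt Δ)
      / (2 * lam * θ * (μ + θ)))) :
    0 < Pd ↔ μ > lam * σz2 := by
  have hd : 0 < 2 * lam * θ * (μ + θ) := by positivity
  have ha : 0 ≤ lam * σz2 * (2 * θ + μ) := by positivity
  have hC : 0 < 4 * lam * θ * σz2 * (μ + θ) := by positivity
  have key : Δ - (lam * σz2 * (2 * θ + μ)) ^ 2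
      = 4 * lam * θ * σz2 * (μ + θ) * (μ - lam * σz2) := by
    rw [hΔ]; ring
  rw [hPd, lt_max_iff]
  simp only [lt_self_iff_false, false_or]
  rw [lt_div_iff₀ hd, zero_mul, neg_add_eq_sub, sub_pos, Real.lt_sqrt ha]
  constructor
  · intro h
    by_contra hcon
    push_neg at hcon
    nlinarith [mul_nonpos_of_nonneg_of_nonpos hC.le (by linarith : μ - lam * σz2 ≤ 0)]
  · intro h
    nlinarith [mul_pos hC (by linarith : 0 < μ - lam * σz2)]
end

section
/- Let ρ > 0 and σ_h² > 0. Let θ_ε : ℝ → ℝ be differentiable and satisfy σ_h² − θ_ε(x) + x·θ_ε'(x) ≥ 0 for all x ≥ 0. Let μ̂, θ : ℝ → ℝ be differentiable with μ̂'(t) = −2ρ μ̂(t) and θ'(t) = 2ρ(σ_h² − θ(t)). If at some time t one has μ̂(t) > 0 and θ(t) < θ_ε(μ̂(t)), then the derivative of κ(s) = θ(s) − θ_ε(μ̂(s)) at s = t is strictly positive. -/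
/-- Below the free boundary, under zero pilot power, the distance
κ(s) = θ(s) − θ_ε(μ̂(s)) to the free boundary has strictly positive derivative. -/
theorem stmt9 (ρ σh2 : ℝ) (hρ : 0 < ρ) (hσh : 0 < σh2)
    (θε : ℝ → ℝ) (hθε : Differentiable ℝ θε)
    (hP1 : ∀ x : ℝ, 0 ≤ x → 0 ≤ σh2 - θε x + x * deriv θε x)
    (μ θ : ℝ → ℝ) (hμdiff : Differentiable ℝ μ) (hθdiff : Differentiable ℝ θ)
    (hμ' : ∀ s, deriv μ s = -(2 * ρ * μ s))
    (hθ' : ∀ s, deriv θ s = 2 * ρ * (σh2 - θ s))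
    (t : ℝ) (hpos : 0 < μ t) (hbelow : θ t < θε (μ t)) :
    0 < deriv (fun s => θ s - θε (μ s)) t := by
  have hcomp : deriv (fun s => θε (μ s)) t = deriv θε (μ t) * deriv μ t := by
    rw [← Function.comp_def]
    exact deriv_comp t (hθε (μ t)) (hμdiff t)
  have hc : DifferentiableAt ℝ (fun s => θε (μ s)) t :=
    (hθε (μ t)).comp t (hμdiff t)
  have h := deriv_fun_sub (hθdiff t) hc
  rw [hcomp] at h
  rw [h, hθ' t, hμ' t]
  have hP := hP1 (μ t) hpos.le
  nlinarith [hP, hbelow, hρ, hpos]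
end

section
/- Let σ_h² > 0 and let θ_ε : [0, ∞) → ℝ be continuous with 0 < θ_ε(u) < σ_h² for all u ≥ 0. Define f(u) = (1/(σ_h² − θ_ε(u))) · exp(−∫₀ᵘ 1/(σ_h² − θ_ε(s)) ds). Then for every a ≥ 0, ∫ₐ^∞ u f(u) du ≤ (a + σ_h²) · ∫ₐ^∞ f(u) du. -/
open MeasureTheory intervalIntegral Filter Set Topology

/-- Conditional-mean bound for the steady-state density of the channel estimate:
∫ₐ^∞ u f(u) du ≤ (a + σ_h²) ∫ₐ^∞ f(u) du. -/
theorem stmt13 (σh2 : ℝ) (hσh : 0 < σh2)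
    (θε : ℝ → ℝ) (hcont : Continuous θε)
    (hθε : ∀ u : ℝ, 0 ≤ u → 0 < θε u ∧ θε u < σh2)
    (f : ℝ → ℝ)
    (hf : ∀ u : ℝ, 0 ≤ u → f u = (1 / (σh2 - θε u)) *
      Real.exp (-(∫ s in (0 : ℝ)..u, 1 / (σh2 - θε s)))) :
    ∀ a : ℝ, 0 ≤ a →
      ∫ u in Set.Ioi a, u * f u ≤ (a + σh2) * ∫ u in Set.Ioi a, f u := by
  intro a ha
  set g : ℝ → ℝ := fun s => 1 / (σh2 - θε |s|) with hg_def
  have hden : ∀ s : ℝ, 0 < σh2 - θε |s| := fun s =>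
    sub_pos.mpr (hθε |s| (abs_nonneg s)).2
  have hgpos : ∀ s : ℝ, 0 < g s := fun s => one_div_pos.mpr (hden s)
  have hg_ge : ∀ s : ℝ, σh2⁻¹ ≤ g s := by
    intro s
    show σh2⁻¹ ≤ 1 / (σh2 - θε |s|)
    rw [inv_eq_one_div]
    exact one_div_le_one_div_of_le (hden s) (by linarith [(hθε |s| (abs_nonneg s)).1])
  have hgc : Continuous g := by
    apply Continuous.div continuous_const
    · exact (continuous_const.sub (hcont.comp continuous_abs))
    · exact fun s => (hden s).ne'
  set F : ℝ → ℝ := fun u => ∫ s in (0:ℝ)..u, g s with hF_def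
  have hFd : ∀ u : ℝ, HasDerivAt F (g u) u := fun u =>
    intervalIntegral.integral_hasDerivAt_right (hgc.intervalIntegrable 0 u)
      (hgc.stronglyMeasurableAtFilter _ _) hgc.continuousAt
  set E : ℝ → ℝ := fun u => Real.exp (-F u) with hE_def
  have hEpos : ∀ u, 0 < E u := fun u => Real.exp_pos _
  have hEd : ∀ u : ℝ, HasDerivAt E (-(g u * E u)) u := by
    intro u
    have := ((hFd u).neg).exp
    simpa [hE_def, neg_mul, mul_comm] using this
  -- f u = g u * E u for u ≥ 0
  have hfe : ∀ u : ℝ, 0 ≤ u → f u = g u * E u := by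
    intro u hu
    rw [hf u hu]
    congr 1
    · rw [hg_def]; simp [abs_of_nonneg hu]
    · congr 1
      rw [hF_def]
      congr 1
      apply intervalIntegral.integral_congr
      intro s hs
      rw [Set.uIcc_of_le hu] at hs
      simp [hg_def, abs_of_nonneg hs.1]
  -- F u ≥ u * σh2⁻¹ for u ≥ 0
  have hF_lb : ∀ u : ℝ, 0 ≤ u → u * σh2⁻¹ ≤ F u := by
    intro u hu
    have : ∫ s in (0:ℝ)..u, σh2⁻¹ ≤ ∫ s in (0:ℝ)..u, g s :=
      intervalIntegral.integral_mono_on hu (intervalIntegrable_const)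
        (hgc.intervalIntegrable 0 u) (fun s _ => hg_ge s)
    simpa using this
  -- tendsto lemmas
  have hEub : ∀ u : ℝ, 0 ≤ u → E u ≤ Real.exp (-(u * σh2⁻¹)) := by
    intro u hu
    exact Real.exp_le_exp.mpr (neg_le_neg (hF_lb u hu))
  have htop : Tendsto (fun u : ℝ => u * σh2⁻¹) atTop atTop :=
    Tendsto.atTop_mul_const (inv_pos.mpr hσh) tendsto_id
  have hE0 : Tendsto E atTop (𝓝 0) := by
    apply squeeze_zero' (Eventually.of_forall fun u => (hEpos u).le)
      (eventually_atTop.mpr ⟨0, fun u hu => hEub u hu⟩)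
    exact Real.tendsto_exp_atBot.comp ((tendsto_neg_atBot_iff.mpr htop).congr (fun u => rfl))
  have hxE0 : Tendsto (fun u : ℝ => (u + σh2) * E u) atTop (𝓝 0) := by
    apply squeeze_zero' (eventually_atTop.mpr ⟨0, fun u hu =>
        mul_nonneg (by linarith) (hEpos u).le⟩)
      (eventually_atTop.mpr ⟨0, fun u hu =>
        mul_le_mul_of_nonneg_left (hEub u hu) (by linarith)⟩)
    have h1 : Tendsto (fun t : ℝ => σh2 * (t * Real.exp (-t)) + σh2 * Real.exp (-t))
        atTop (𝓝 (σh2 * 0 + σh2 * 0)) := by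
      apply Tendsto.add
      · exact (Real.tendsto_pow_mul_exp_neg_atTop_nhds_zero 1).const_mul σh2 |>.congr
          (fun t => by ring)
      · exact (Real.tendsto_exp_atBot.comp tendsto_neg_atTop_atBot).const_mul σh2
    have h2 := h1.comp htop
    simp only [mul_zero, add_zero] at h2
    apply h2.congr
    intro u
    have : σh2 * (u * σh2⁻¹) = u := by field_simp
    simp only [Function.comp_apply]
    rw [show σh2 * (u * σh2⁻¹ * Real.exp (-(u * σh2⁻¹))) + σh2 * Real.exp (-(u * σh2⁻¹))
        = (σh2 * (u * σh2⁻¹) + σh2) * Real.exp (-(u * σh2⁻¹)) by ring, this]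
  -- RHS integral: ∫_{Ioi a} f = E a
  have hderiv1 : ∀ u ∈ Set.Ioi a, HasDerivAt (fun x => -E x) (g u * E u) u := by
    intro u _
    exact (hEd u).neg.congr_deriv (neg_neg _)
  have hnonneg1 : ∀ u ∈ Set.Ioi a, 0 ≤ g u * E u :=
    fun u _ => mul_nonneg (hgpos u).le (hEpos u).le
  have hcont1 : ContinuousWithinAt (fun x => -E x) (Set.Ici a) a :=
    ((hEd a).continuousAt.neg).continuousWithinAt
  have htend1 : Tendsto (fun x => -E x) atTop (𝓝 0) := by
    simpa using hE0.neg
  have hint1 : IntegrableOn (fun u => g u * E u) (Set.Ioi a) :=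
    integrableOn_Ioi_deriv_of_nonneg hcont1 hderiv1 hnonneg1 htend1
  have heq1 : ∫ u in Set.Ioi a, g u * E u = E a := by
    have := integral_Ioi_of_hasDerivAt_of_tendsto hcont1 hderiv1 hint1 htend1
    simpa using this
  -- dominating function D u = ((u+σh2)*g u - 1) * E u
  set D : ℝ → ℝ := fun u => ((u + σh2) * g u - 1) * E u with hD_def
  have hderiv2 : ∀ u ∈ Set.Ioi a, HasDerivAt (fun x => -((x + σh2) * E x)) (D u) u := by
    intro u _
    have h := (((hasDerivAt_id u).add_const σh2).mul (hEd u)).neg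
    exact h.congr_deriv (by simp only [hD_def, id_eq]; ring)
  have hnonneg2 : ∀ u ∈ Set.Ioi a, 0 ≤ D u := by
    intro u hu
    have hu0 : (0:ℝ) ≤ u := le_trans ha (le_of_lt hu)
    have h1 : (1:ℝ) ≤ (u + σh2) * g u := by
      calc (1:ℝ) = σh2 * σh2⁻¹ := (mul_inv_cancel₀ hσh.ne').symm
        _ ≤ (u + σh2) * g u :=
          mul_le_mul (by linarith) (hg_ge u) (inv_pos.mpr hσh).le (by linarith)
    exact mul_nonneg (by linarith) (hEpos u).le
  have hcont2 : ContinuousWithinAt (fun x => -((x + σh2) * E x)) (Set.Ici a) a := by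
    apply ContinuousAt.continuousWithinAt
    exact (((continuousAt_id).add continuousAt_const).mul (hEd a).continuousAt).neg
  have htend2 : Tendsto (fun x => -((x + σh2) * E x)) atTop (𝓝 0) := by
    simpa using hxE0.neg
  have hint2 : IntegrableOn D (Set.Ioi a) :=
    integrableOn_Ioi_deriv_of_nonneg hcont2 hderiv2 hnonneg2 htend2
  have heq2 : ∫ u in Set.Ioi a, D u = (a + σh2) * E a := by
    have := integral_Ioi_of_hasDerivAt_of_tendsto hcont2 hderiv2 hint2 htend2
    simpa using this
  -- rewrite the integrals over f
  have hcongr1 : ∫ u in Set.Ioi a, f u = ∫ u in Set.Ioi a, g u * E u := by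
    apply setIntegral_congr_fun measurableSet_Ioi
    intro u hu
    exact hfe u (le_trans ha (le_of_lt hu))
  have hcongr2 : ∫ u in Set.Ioi a, u * f u = ∫ u in Set.Ioi a, u * (g u * E u) := by
    apply setIntegral_congr_fun measurableSet_Ioi
    intro u hu
    simp only [hfe u (le_trans ha (le_of_lt hu))]
  rw [hcongr1, hcongr2, heq1]
  calc ∫ u in Set.Ioi a, u * (g u * E u)
      ≤ ∫ u in Set.Ioi a, D u := by
        apply integral_mono_of_nonneg
        · filter_upwards [ae_restrict_mem measurableSet_Ioi] with u hu
          have hu0 : (0:ℝ) ≤ u := le_trans ha (le_of_lt hu)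
          exact mul_nonneg hu0 (mul_nonneg (hgpos u).le (hEpos u).le)
        · exact hint2
        · filter_upwards [ae_restrict_mem measurableSet_Ioi] with u hu
          have hu0 : (0:ℝ) ≤ u := le_trans ha (le_of_lt hu)
          have h1 : σh2 * g u - 1 ≥ 0 := by
            have := hg_ge u
            have : σh2 * σh2⁻¹ ≤ σh2 * g u :=
              mul_le_mul_of_nonneg_left this hσh.le
            rw [mul_inv_cancel₀ hσh.ne'] at this
            linarith
          have : u * (g u * E u) ≤ ((u + σh2) * g u - 1) * E u := by
            have hE := (hEpos u).le
            nlinarith [mul_nonneg h1 hE]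
          exact this
    _ = (a + σh2) * E a := heq2
end

section
/- Let σ_h² > 0, let θ_ε : [0, ∞) → ℝ be continuous with 0 < θ_ε(u) < σ_h² for all u ≥ 0, and define f(u) = (1/(σ_h² − θ_ε(u))) · exp(−∫₀ᵘ 1/(σ_h² − θ_ε(s)) ds). Then for every a ≥ 0 and every c > 0, writing q = ∫ₐ^∞ f(u) du, one has ∫ₐ^∞ log(1 + c u) f(u) du ≤ q · log(1 + c (a + σ_h²)). -/
open MeasureTheory intervalIntegral Filter Topology

/-- Jensen-type upper bound on the on-off achievable rate:
∫ₐ^∞ log(1 + cu) f(u) du ≤ q log(1 + c(a + σ_h²)), where q = ∫ₐ^∞ f(u) du and f is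
the steady-state density of the channel estimate. -/
theorem stmt18 (σh2 : ℝ) (hσh : 0 < σh2)
    (θε : ℝ → ℝ) (hcont : Continuous θε)
    (hθε : ∀ u : ℝ, 0 ≤ u → 0 < θε u ∧ θε u < σh2)
    (f : ℝ → ℝ)
    (hf : ∀ u : ℝ, 0 ≤ u → f u = (1 / (σh2 - θε u)) *
      Real.exp (-(∫ s in (0 : ℝ)..u, 1 / (σh2 - θε s)))) :
    ∀ a : ℝ, 0 ≤ a → ∀ c : ℝ, 0 < c →
      ∫ u in Set.Ioi a, Real.log (1 + c * u) * f u ≤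
        (∫ u in Set.Ioi a, f u) * Real.log (1 + c * (a + σh2)) := by
  intro a ha c hc
  have hθ'cont : Continuous (fun s : ℝ => θε (max s 0)) :=
    hcont.comp (continuous_id.max continuous_const)
  set D : ℝ → ℝ := fun s => 1 / (σh2 - θε (max s 0)) with hDdef
  have hden : ∀ s : ℝ, 0 < σh2 - θε (max s 0) :=
    fun s => sub_pos.2 (hθε _ (le_max_right s 0)).2
  have hDcont : Continuous D :=
    continuous_const.div (continuous_const.sub hθ'cont) fun s => (hden s).ne'
  have hDpos : ∀ s, 0 < D s := fun s => div_pos one_pos (hden s)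
  have hDge : ∀ s, 1 / σh2 ≤ D s := fun s =>
    one_div_le_one_div_of_le (hden s) (sub_le_self _ (hθε _ (le_max_right s 0)).1.le)
  set G : ℝ → ℝ := fun u => ∫ s in (0:ℝ)..u, D s with hGdef
  have hGderiv : ∀ u : ℝ, HasDerivAt G (D u) u := fun u =>
    intervalIntegral.integral_hasDerivAt_right (hDcont.intervalIntegrable 0 u)
      (hDcont.stronglyMeasurableAtFilter _ _) hDcont.continuousAt
  set F : ℝ → ℝ := fun u => Real.exp (-(G u)) with hFdef
  have hFpos : ∀ u, 0 < F u := fun u => Real.exp_pos _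
  have hFderiv : ∀ u : ℝ, HasDerivAt F (-(D u * F u)) u := by
    intro u
    have h := ((hGderiv u).neg).exp
    convert h using 1
    simp [hFdef]; ring_nf
    rfl
  have hGcont : Continuous G :=
    continuous_iff_continuousAt.2 fun u => (hGderiv u).continuousAt
  have hFcont : Continuous F := Real.continuous_exp.comp hGcont.neg
  have hDFcont : Continuous (fun u => D u * F u) := hDcont.mul hFcont
  -- f coincides with D * F on nonnegative reals
  have hfeq : ∀ u : ℝ, 0 ≤ u → f u = D u * F u := by
    intro u hu
    rw [hf u hu]
    have h1 : (1 : ℝ) / (σh2 - θε u) = D u := by simp [hDdef, max_eq_left hu]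
    have h2 : (∫ s in (0:ℝ)..u, 1 / (σh2 - θε s)) = G u := by
      apply intervalIntegral.integral_congr
      intro s hs
      rw [Set.uIcc_of_le hu] at hs
      simp [hDdef, max_eq_left hs.1]
    rw [h1, h2]
  have hfeqOn : Set.EqOn f (fun u => D u * F u) (Set.Ioi a) :=
    fun u hu => hfeq u (ha.trans (le_of_lt hu))
  -- exponential tail bound
  have hGsub : ∀ u, a ≤ u → (u - a) / σh2 ≤ G u - G a := by
    intro u hu
    have h1 : G u - G a = ∫ s in a..u, D s :=
      intervalIntegral.integral_interval_sub_left (hDcont.intervalIntegrable 0 u)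
        (hDcont.intervalIntegrable 0 a)
    have h2 : (∫ s in a..u, (1:ℝ)/σh2) ≤ ∫ s in a..u, D s :=
      intervalIntegral.integral_mono_on hu (intervalIntegrable_const)
        (hDcont.intervalIntegrable a u) (fun x _ => hDge x)
    rw [h1]
    calc (u - a)/σh2 = ∫ s in a..u, (1:ℝ)/σh2 := by
          rw [intervalIntegral.integral_const, smul_eq_mul]; ring
      _ ≤ _ := h2
  have hFbd : ∀ u, a ≤ u → F u ≤ F a * Real.exp (-((u - a)/σh2)) := by
    intro u hu
    rw [hFdef]
    simp only
    rw [← Real.exp_add]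
    apply Real.exp_le_exp.2
    have := hGsub u hu
    linarith
  -- limits at infinity
  have hratio : Tendsto (fun u : ℝ => (u - a)/σh2) atTop atTop :=
    (tendsto_atTop_add_const_right _ (-a) tendsto_id).atTop_div_const hσh
  have hexp0 : Tendsto (fun u : ℝ => Real.exp (-((u - a)/σh2))) atTop (𝓝 0) :=
    Real.tendsto_exp_atBot.comp (tendsto_neg_atTop_atBot.comp hratio)
  have hFtendsto : Tendsto F atTop (𝓝 0) := by
    apply squeeze_zero' (Filter.Eventually.of_forall fun u => (hFpos u).le)
      ?_ (by simpa using hexp0.const_mul (F a))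
    filter_upwards [Filter.Ici_mem_atTop a] with u hu
    exact hFbd u hu
  have hlinF0 : Tendsto (fun u : ℝ => (u - a) * F u) atTop (𝓝 0) := by
    have base : Tendsto (fun u : ℝ => ((u - a)/σh2) ^ 1 * Real.exp (-((u - a)/σh2)))
        atTop (𝓝 0) := (Real.tendsto_pow_mul_exp_neg_atTop_nhds_zero 1).comp hratio
    have base2 : Tendsto (fun u : ℝ => (u - a) * (F a * Real.exp (-((u - a)/σh2))))
        atTop (𝓝 0) := by
      have := (base.const_mul (F a * σh2))
      rw [mul_zero] at this
      apply this.congr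
      intro u
      field_simp
    apply squeeze_zero' ?_ ?_ base2
    · filter_upwards [Filter.Ici_mem_atTop a] with u hu
      simp only [Set.mem_Ici] at hu
      exact mul_nonneg (by linarith) (hFpos u).le
    · filter_upwards [Filter.Ici_mem_atTop a] with u hu
      simp only [Set.mem_Ici] at hu
      exact mul_le_mul_of_nonneg_left (hFbd u hu) (by linarith)
  -- integral of D * F on Ioi a
  have hnegFderiv : ∀ x ∈ Set.Ici a, HasDerivAt (fun u => -F u) (D x * F x) x := by
    intro x _
    have := (hFderiv x).neg
    rw [neg_neg] at this
    exact this
  have hDFnonneg : ∀ x ∈ Set.Ioi a, (0:ℝ) ≤ D x * F x :=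
    fun x _ => (mul_pos (hDpos x) (hFpos x)).le
  have hnegFtendsto : Tendsto (fun u => -F u) atTop (𝓝 (-0)) := hFtendsto.neg
  have hDFint : IntegrableOn (fun u => D u * F u) (Set.Ioi a) :=
    integrableOn_Ioi_deriv_of_nonneg' hnegFderiv hDFnonneg hnegFtendsto
  have hDFval : ∫ u in Set.Ioi a, D u * F u = F a := by
    have := integral_Ioi_of_hasDerivAt_of_nonneg' hnegFderiv hDFnonneg hnegFtendsto
    simpa using this
  -- integrability of F and bound on its integral
  have hbint : IntegrableOn (fun u : ℝ => F a * Real.exp (-((u - a)/σh2))) (Set.Ioi a) := by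
    have h0 : IntegrableOn (fun u : ℝ => Real.exp (-(1/σh2) * u)) (Set.Ioi a) :=
      exp_neg_integrableOn_Ioi a (by positivity)
    have h1 := h0.const_mul (F a * Real.exp (a/σh2))
    refine MeasureTheory.IntegrableOn.congr_fun h1 (fun u _ => ?_) measurableSet_Ioi
    rw [mul_assoc, ← Real.exp_add]
    congr 1
    ring
  have hFint : IntegrableOn F (Set.Ioi a) := by
    apply Integrable.mono' hbint (hFcont.aestronglyMeasurable.restrict)
    filter_upwards [self_mem_ae_restrict measurableSet_Ioi] with u hu
    rw [Real.norm_eq_abs, abs_of_nonneg (hFpos u).le]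
    exact hFbd u (le_of_lt hu)
  have hbval : ∫ u in Set.Ioi a, F a * Real.exp (-((u - a)/σh2)) = σh2 * F a := by
    have hderiv : ∀ x ∈ Set.Ici a,
        HasDerivAt (fun u : ℝ => -(σh2 * F a) * Real.exp (-((u - a)/σh2)))
          (F a * Real.exp (-((x - a)/σh2))) x := by
      intro x _
      have h1 : HasDerivAt (fun u : ℝ => -((u - a)/σh2)) (-(1/σh2)) x := by
        exact (((hasDerivAt_id x).sub_const a).div_const σh2).neg
      have h2 := (h1.exp).const_mul (-(σh2 * F a))
      convert h2 using 1
      · rfl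
      · rfl
      · field_simp
    have htend : Tendsto (fun u : ℝ => -(σh2 * F a) * Real.exp (-((u - a)/σh2)))
        atTop (𝓝 0) := by simpa using hexp0.const_mul (-(σh2 * F a))
    have := integral_Ioi_of_hasDerivAt_of_tendsto' hderiv hbint htend
    rw [this]
    simp
  have hFintval : ∫ u in Set.Ioi a, F u ≤ σh2 * F a := by
    rw [← hbval]
    exact setIntegral_mono_on hFint hbint measurableSet_Ioi fun u hu => hFbd u (le_of_lt hu)
  -- integral of (u - a) * D u * F u
  have hhderiv : ∀ x ∈ Set.Ici a,
      HasDerivAt (fun u => (∫ s in a..u, F s) - (u - a) * F u) ((x - a) * (D x * F x)) x := by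
    intro x _
    have h1 : HasDerivAt (fun u => ∫ s in a..u, F s) (F x) x :=
      intervalIntegral.integral_hasDerivAt_right (hFcont.intervalIntegrable a x)
        (hFcont.stronglyMeasurableAtFilter _ _) hFcont.continuousAt
    have h2 : HasDerivAt (fun u => (u - a) * F u)
        (1 * F x + (x - a) * -(D x * F x)) x :=
      ((hasDerivAt_id x).sub_const a).mul (hFderiv x)
    have := h1.sub h2
    convert this using 1
    · rfl
    · rfl
    · rfl
    · ring
  have hhnonneg : ∀ x ∈ Set.Ioi a, (0:ℝ) ≤ (x - a) * (D x * F x) := by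
    intro x hx
    exact mul_nonneg (by simp at hx; linarith) (hDFnonneg x hx)
  have hhtendsto : Tendsto (fun u => (∫ s in a..u, F s) - (u - a) * F u) atTop
      (𝓝 ((∫ u in Set.Ioi a, F u) - 0)) :=
    (intervalIntegral_tendsto_integral_Ioi a hFint tendsto_id).sub hlinF0
  have hxfint : IntegrableOn (fun u => (u - a) * (D u * F u)) (Set.Ioi a) :=
    integrableOn_Ioi_deriv_of_nonneg' hhderiv hhnonneg hhtendsto
  have hxfval : ∫ u in Set.Ioi a, (u - a) * (D u * F u) ≤ σh2 * F a := by
    have := integral_Ioi_of_hasDerivAt_of_nonneg' hhderiv hhnonneg hhtendsto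
    simp only [intervalIntegral.integral_same, sub_self, zero_mul, sub_zero] at this
    rw [this]
    simpa using hFintval
  -- the measurement: log factor setup
  set m : ℝ := a + σh2 with hmdef
  have hm0 : 0 < 1 + c * m := by positivity
  set k : ℝ := c / (1 + c * m) with hkdef
  have hk0 : 0 ≤ k := div_nonneg hc.le hm0.le
  set r : ℝ := Real.log (1 + c * m) with hrdef
  -- pointwise log bound
  have hlogbd : ∀ u : ℝ, a < u → Real.log (1 + c * u) ≤ r + k * (u - m) := by
    intro u hu
    have hu0 : 0 < 1 + c * u := by nlinarith
    have h1 : Real.log ((1 + c * u) / (1 + c * m)) ≤ (1 + c * u) / (1 + c * m) - 1 :=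
      Real.log_le_sub_one_of_pos (by positivity)
    rw [Real.log_div hu0.ne' hm0.ne'] at h1
    have h2 : (1 + c * u) / (1 + c * m) - 1 = k * (u - m) := by
      rw [hkdef]; field_simp; ring
    rw [h2] at h1
    rw [hrdef]; linarith
  -- continuity/measurability of log term on Ioi a
  have hlogcont : ContinuousOn (fun u : ℝ => Real.log (1 + c * u)) (Set.Ioi a) := by
    apply ContinuousOn.log
    · exact (continuous_const.add (continuous_const.mul continuous_id)).continuousOn
    · intro x hx
      have : (0:ℝ) < 1 + c * x := by simp at hx; nlinarith
      exact this.ne'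
  -- integrability of log(1+cu) * (D u * F u) on Ioi a
  have hLint : IntegrableOn (fun u => Real.log (1 + c * u) * (D u * F u)) (Set.Ioi a) := by
    apply Integrable.mono'
      ((hxfint.const_mul c).add (hDFint.const_mul (c * a)))
      ((hlogcont.mul hDFcont.continuousOn).aestronglyMeasurable measurableSet_Ioi)
    filter_upwards [self_mem_ae_restrict measurableSet_Ioi] with u hu
    simp only [Set.mem_Ioi] at hu
    have hu0 : (0:ℝ) < u := lt_of_le_of_lt ha hu
    have hlog0 : 0 ≤ Real.log (1 + c * u) :=
      Real.log_nonneg (by nlinarith)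
    have hloge : Real.log (1 + c * u) ≤ c * u := by
      have := Real.log_le_sub_one_of_pos (show (0:ℝ) < 1 + c * u by positivity)
      linarith
    have hDF0 : 0 ≤ D u * F u := (mul_pos (hDpos u) (hFpos u)).le
    simp only [Pi.mul_apply, Pi.add_apply]
    rw [Real.norm_eq_abs, abs_of_nonneg (mul_nonneg hlog0 hDF0)]
    have : Real.log (1 + c * u) * (D u * F u) ≤ (c * u) * (D u * F u) :=
      mul_le_mul_of_nonneg_right hloge hDF0
    calc Real.log (1 + c * u) * (D u * F u) ≤ (c * u) * (D u * F u) := this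
      _ = c * ((u - a) * (D u * F u)) + (c * a) * (D u * F u) := by ring
  -- rewrite the goal in terms of D * F
  rw [setIntegral_congr_fun measurableSet_Ioi
      (show Set.EqOn (fun u => Real.log (1 + c * u) * f u)
        (fun u => Real.log (1 + c * u) * (D u * F u)) (Set.Ioi a) from
        fun u hu => by simp only [hfeqOn hu]),
    setIntegral_congr_fun measurableSet_Ioi hfeqOn, hDFval]
  -- monotone comparison with the affine upper bound
  have hRint : IntegrableOn
      (fun u => r * (D u * F u) + k * ((u - a) * (D u * F u)) - (k * σh2) * (D u * F u))
      (Set.Ioi a) :=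
    ((hDFint.const_mul r).add (hxfint.const_mul k)).sub (hDFint.const_mul (k * σh2))
  have hmono : ∫ u in Set.Ioi a, Real.log (1 + c * u) * (D u * F u) ≤
      ∫ u in Set.Ioi a, (r * (D u * F u) + k * ((u - a) * (D u * F u))
        - (k * σh2) * (D u * F u)) := by
    apply setIntegral_mono_on hLint hRint measurableSet_Ioi
    intro u hu
    simp only [Set.mem_Ioi] at hu
    have hDF0 : 0 ≤ D u * F u := (mul_pos (hDpos u) (hFpos u)).le
    have h1 := mul_le_mul_of_nonneg_right (hlogbd u hu) hDF0
    calc Real.log (1 + c * u) * (D u * F u) ≤ (r + k * (u - m)) * (D u * F u) := h1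
      _ = r * (D u * F u) + k * ((u - a) * (D u * F u)) - (k * σh2) * (D u * F u) := by
        rw [hmdef]; ring
  have hRval : ∫ u in Set.Ioi a, (r * (D u * F u) + k * ((u - a) * (D u * F u))
      - (k * σh2) * (D u * F u)) =
      r * F a + k * (∫ u in Set.Ioi a, (u - a) * (D u * F u)) - (k * σh2) * F a := by
    have e1 : ∫ u in Set.Ioi a, (r * (D u * F u) + k * ((u - a) * (D u * F u))
        - (k * σh2) * (D u * F u)) =
        (∫ u in Set.Ioi a, (r * (D u * F u) + k * ((u - a) * (D u * F u)))) -
          ∫ u in Set.Ioi a, (k * σh2) * (D u * F u) :=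
      integral_sub ((hDFint.const_mul r).add (hxfint.const_mul k))
        (hDFint.const_mul (k * σh2))
    have e2 : ∫ u in Set.Ioi a, (r * (D u * F u) + k * ((u - a) * (D u * F u))) =
        (∫ u in Set.Ioi a, r * (D u * F u)) +
          ∫ u in Set.Ioi a, k * ((u - a) * (D u * F u)) :=
      integral_add (hDFint.const_mul r) (hxfint.const_mul k)
    rw [e1, e2, MeasureTheory.integral_const_mul, MeasureTheory.integral_const_mul, MeasureTheory.integral_const_mul, hDFval]
  rw [hRval] at hmono
  have : k * (∫ u in Set.Ioi a, (u - a) * (D u * F u)) ≤ k * (σh2 * F a) :=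
    mul_le_mul_of_nonneg_left hxfval hk0
  have hfinal : r * F a + k * (∫ u in Set.Ioi a, (u - a) * (D u * F u))
      - (k * σh2) * F a ≤ F a * r := by nlinarith
  linarith
end

section
/- Let ρ > 0, σ_z² > 0, σ_h² > 0 and ε_max > 0, set γ = ε_max/(ρ σ_z²) and θ* = (√(1 + 2 σ_h² γ) − 1)/γ. Let θ : [0, ∞) → ℝ be differentiable and satisfy θ'(t) ≥ 2ρ(σ_h² − θ(t)) − ε_max θ(t)²/σ_z² for all t ≥ 0. If θ(0) ≥ θ*, then θ(t) ≥ θ* for all t ≥ 0. -/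
/-- Invariance of {θ ≥ θ*}: if the estimation error variance satisfies the
differential inequality θ'(t) ≥ 2ρ(σ_h² − θ) − ε_max θ²/σ_z² and starts at or
above the full-power steady state θ*, it stays at or above θ* forever. -/
theorem stmt19 (ρ σz2 σh2 εmax γ θstar : ℝ)
    (hρ : 0 < ρ) (hσz : 0 < σz2) (hσh : 0 < σh2) (hεmax : 0 < εmax)
    (hγ : γ = εmax / (ρ * σz2))
    (hθstar : θstar = (Real.sqrt (1 + 2 * σh2 * γ) - 1) / γ)
    (θ : ℝ → ℝ) (hdiff : Differentiable ℝ θ)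
    (hineq : ∀ t : ℝ, 0 ≤ t →
      2 * ρ * (σh2 - θ t) - εmax * (θ t) ^ 2 / σz2 ≤ deriv θ t)
    (h0 : θstar ≤ θ 0) :
    ∀ t : ℝ, 0 ≤ t → θstar ≤ θ t := by
  have hγpos : 0 < γ := by
    rw [hγ]; positivity
  set s : ℝ := Real.sqrt (1 + 2 * σh2 * γ) with hs
  have hs2 : s ^ 2 = 1 + 2 * σh2 * γ := by
    rw [hs, Real.sq_sqrt]; positivity
  set a : ℝ := εmax / σz2 with ha
  have hapos : 0 < a := by positivity
  set r : ℝ := -(2 * ρ * σz2 / εmax) - θstar with hr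
  have hεmax' : εmax = γ * ρ * σz2 := by
    rw [hγ]; field_simp
  have hrγ : r = -(s + 1) / γ := by
    rw [hr, hθstar, hεmax']; field_simp; ring
  -- key algebraic factorization
  have key : ∀ x : ℝ, 2 * ρ * (σh2 - x) - εmax * x ^ 2 / σz2
      = a * (θstar - x) * (x - r) := by
    intro x
    rw [ha, hθstar, hrγ, hεmax']
    field_simp
    nlinarith [hs2, sq_nonneg γ, hγpos, hρ, hσz]
  -- the integrating factor
  set g : ℝ → ℝ := fun t => a * (θ t - r) with hg
  have hgc : Continuous g := (continuous_const.mul (hdiff.continuous.sub continuous_const))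
  set F : ℝ → ℝ := fun t => ∫ u in (0:ℝ)..t, g u with hF
  have hFd : ∀ t, HasDerivAt F (g t) t := fun t =>
    (hgc.integral_hasStrictDerivAt 0 t).hasDerivAt
  set h : ℝ → ℝ := fun t => (θ t - θstar) * Real.exp (F t) with hh
  have hhd : ∀ t, HasDerivAt h
      ((deriv θ t) * Real.exp (F t)
        + (θ t - θstar) * (Real.exp (F t) * g t)) t := by
    intro t
    exact ((hdiff t).hasDerivAt.sub_const θstar).mul ((hFd t).exp)
  have hhdiff : Differentiable ℝ h := fun t => (hhd t).differentiableAt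
  have hmono : MonotoneOn h (Set.Ici (0:ℝ)) := by
    apply monotoneOn_of_deriv_nonneg (convex_Ici 0) hhdiff.continuous.continuousOn
      (fun t _ => (hhdiff t).differentiableWithinAt)
    intro t ht
    rw [interior_Ici] at ht
    rw [(hhd t).deriv]
    have h1 := hineq t ht.le
    have h2 := key (θ t)
    have hex : 0 < Real.exp (F t) := Real.exp_pos _
    have hz : 2 * ρ * (σh2 - θ t) - εmax * (θ t) ^ 2 / σz2
        + (θ t - θstar) * g t = 0 := by
      rw [h2, hg]; ring
    nlinarith [mul_le_mul_of_nonneg_right h1 hex.le]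
  intro t ht
  have hF0 : F 0 = 0 := by simp [hF]
  have h00 : h 0 = θ 0 - θstar := by simp [hh, hF0]
  have hmt := hmono (Set.self_mem_Ici) ht ht
  rw [h00] at hmt
  have hge : 0 ≤ (θ t - θstar) * Real.exp (F t) := le_trans (by linarith) hmt
  have hex : 0 < Real.exp (F t) := Real.exp_pos _
  nlinarith [hge, hex]
end
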